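/- Equivalence of fill1 and fill2 characterizations: for a directed graph G on {0,...,n-1}, let G⁺ be the 'filled graph' obtained by the closure rule: whenever there is a fill-path from i to j in the current graph, add edge (i,j), iterated to a fixed point. Then the edge set of G⁺ equals exactly { (i,j) : there is a fill-path from i to j in the original graph G }. In particular, applying the fill-path criterion to the filled graph produces no additional edges beyond applying it once to the original graph. -/

import Mathlib

/-- `IsPath G a l b` : directed path from `a` to `b` with intermediate vertices `l`. -/
def IsPath (G : ℕ → ℕ → Prop) : ℕ → List ℕ → ℕ → Prop
  | a, [], b => G a b
  | a, x :: xs, b => G a x ∧ IsPath G x xs b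

/-- A fill-path from `i` to `j` in a graph `H`: all intermediates are `< min i j`. -/
def FillPath (H : ℕ → ℕ → Prop) (i j : ℕ) : Prop :=
  ∃ l, IsPath H i l j ∧ ∀ v ∈ l, v < i ∧ v < j

/-- The filled graph `G⁺`: the least supergraph of `G` closed under the rule
"a fill-path from `i` to `j` (in the current graph) adds the edge `(i,j)`",
iterated to a fixed point (defined as the intersection of all closed supergraphs). -/
def FilledClosure (G : ℕ → ℕ → Prop) (i j : ℕ) : Prop :=
  ∀ R : ℕ → ℕ → Prop,
    (∀ a b, G a b → R a b) →
    (∀ a b l, IsPath R a l b → (∀ v ∈ l, v < a ∧ v < b) → R a b) →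
    R i j

lemma isPath_append {H : ℕ → ℕ → Prop} :
    ∀ (l : List ℕ) (a b c : ℕ) (l' : List ℕ),
      IsPath H a l b → IsPath H b l' c → IsPath H a (l ++ b :: l') c
  | [], a, b, c, l', h1, h2 => ⟨h1, h2⟩
  | x :: xs, a, b, c, l', h1, h2 =>
    ⟨h1.1, isPath_append xs x b c l' h1.2 h2⟩

lemma isPath_mono {G H : ℕ → ℕ → Prop} (hGH : ∀ a b, G a b → H a b) :
    ∀ (l : List ℕ) (a b : ℕ), IsPath G a l b → IsPath H a l b
  | [], a, b, h => hGH a b h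
  | x :: xs, a, b, h => ⟨hGH a x h.1, isPath_mono hGH xs x b h.2⟩

/-- Splicing lemma: a path in `FillPath G` can be turned into a path in `G`
whose intermediates are controlled. -/
lemma splice (G : ℕ → ℕ → Prop) :
    ∀ (l : List ℕ) (a b : ℕ), IsPath (FillPath G) a l b →
      ∃ l', IsPath G a l' b ∧
        ∀ v ∈ l', (v < a ∧ v < b) ∨ ∃ u ∈ l, v ≤ u := by
  intro l
  induction l with
  | nil =>
    intro a b h
    obtain ⟨l₁, hp, hv⟩ := h
    exact ⟨l₁, hp, fun v hv' => Or.inl (hv v hv')⟩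
  | cons x xs ih =>
    intro a b h
    obtain ⟨hax, hxb⟩ := h
    obtain ⟨l₁, hp₁, hv₁⟩ := hax
    obtain ⟨l₂, hp₂, hv₂⟩ := ih x b hxb
    refine ⟨l₁ ++ x :: l₂, isPath_append l₁ a x b l₂ hp₁ hp₂, ?_⟩
    intro v hv
    rcases List.mem_append.mp hv with h1 | h1
    · exact Or.inr ⟨x, List.mem_cons_self, le_of_lt (hv₁ v h1).2⟩
    · rcases List.mem_cons.mp h1 with rfl | h2
      · exact Or.inr ⟨v, List.mem_cons_self, le_refl v⟩
      · rcases hv₂ v h2 with ⟨hvx, _⟩ | ⟨u, hu, hvu⟩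
        · exact Or.inr ⟨x, List.mem_cons_self, le_of_lt hvx⟩
        · exact Or.inr ⟨u, List.mem_cons_of_mem x hu, hvu⟩

/-- Equivalence of fill1 and fill2 characterizations: the edges of the filled
graph `G⁺` are exactly the pairs joined by a fill-path in the original graph
`G`; iterating the fill-path rule on the filled graph adds nothing new. -/
theorem filled_closure_eq_fillpath (G : ℕ → ℕ → Prop) (i j : ℕ) :
    FilledClosure G i j ↔ FillPath G i j := by
  constructor
  · intro h
    apply h (FillPath G)
    · intro a b hab
      exact ⟨[], hab, by simp⟩
    · intro a b l hpath hlt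
      obtain ⟨l', hp', hv'⟩ := splice G l a b hpath
      refine ⟨l', hp', ?_⟩
      intro v hv
      rcases hv' v hv with h1 | ⟨u, hu, hvu⟩
      · exact h1
      · exact ⟨lt_of_le_of_lt hvu (hlt u hu).1, lt_of_le_of_lt hvu (hlt u hu).2⟩
  · intro ⟨l, hp, hv⟩ R hG hcl
    exact hcl i j l (isPath_mono hG l i j hp) hv
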